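/- Let p ∈ (1,∞) and define F : ℝ^(d×D) → ℝ^(d×D) by F(ξ) = (1+|ξ|)^((p-2)/2) ξ. Then there exist constants c, C > 0 depending only on p such that for all ξ, η: c (1+|ξ|+|η|)^(p-2) |ξ − η|² ≤ |F(ξ) − F(η)|² ≤ C (1+|ξ|+|η|)^(p-2) |ξ − η|². -/

import Mathlib

open Real

private lemma rpow_diff_ge_aux {θ A B : ℝ} (hθ0 : 0 < θ) (hθ1 : θ ≤ 1)
    (hB : 1 ≤ B) (hBA : B ≤ A) :
    θ * A ^ (θ - 1) * (A - B) ≤ A ^ θ - B ^ θ := by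
  have hApos : (0:ℝ) < A := by linarith
  have hBpos : (0:ℝ) < B := by linarith
  have hs : -1 ≤ (B - A) / A := by
    rw [le_div_iff₀ hApos]; linarith
  have hbern := rpow_one_add_le_one_add_mul_self hs hθ0.le hθ1
  have he : 1 + (B - A) / A = B / A := by field_simp; ring
  rw [he, div_rpow hBpos.le hApos.le] at hbern
  have hAθ : (0:ℝ) < A ^ θ := rpow_pos_of_pos hApos θ
  have h2 : B ^ θ ≤ (1 + θ * ((B - A) / A)) * A ^ θ := (div_le_iff₀ hAθ).mp hbern
  have h3 : (1 + θ * ((B - A) / A)) * A ^ θ = A ^ θ + θ * (A ^ θ / A) * (B - A) := by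
    field_simp
  have h4 : A ^ θ / A = A ^ (θ - 1) := by
    rw [Real.rpow_sub hApos, Real.rpow_one]
  rw [h3, h4] at h2
  linarith

private lemma rpow_diff_le_one_aux {θ A B : ℝ} (hθ1 : θ ≤ 1)
    (hB : 1 ≤ B) (hBA : B ≤ A) :
    A ^ θ - B ^ θ ≤ A ^ (θ - 1) * (A - B) := by
  have hApos : (0:ℝ) < A := by linarith
  have hBpos : (0:ℝ) < B := by linarith
  have h1 : A ^ (θ - 1) ≤ B ^ (θ - 1) :=
    rpow_le_rpow_of_nonpos hBpos hBA (by linarith)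
  have h2 : A ^ (θ - 1) * A = A ^ θ := by
    rw [← Real.rpow_add_one (ne_of_gt hApos)]; ring_nf
  have h3 : B ^ (θ - 1) * B = B ^ θ := by
    rw [← Real.rpow_add_one (ne_of_gt hBpos)]; ring_nf
  nlinarith [mul_le_mul_of_nonneg_right h1 (by linarith : (0:ℝ) ≤ B)]

private lemma rpow_diff_le_small_aux {θ A B : ℝ} (hθ0 : 0 ≤ θ) (hθ1 : θ ≤ 1)
    (hB : 1 ≤ B) (hBA : B ≤ A) :
    A ^ θ - B ^ θ ≤ θ * B ^ (θ - 1) * (A - B) := by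
  have hApos : (0:ℝ) < A := by linarith
  have hBpos : (0:ℝ) < B := by linarith
  have hs : -1 ≤ (A - B) / B := by
    have : (0:ℝ) ≤ (A - B) / B := div_nonneg (by linarith) (by linarith)
    linarith
  have hbern := rpow_one_add_le_one_add_mul_self hs hθ0 hθ1
  have he : 1 + (A - B) / B = A / B := by field_simp; ring
  rw [he, div_rpow hApos.le hBpos.le] at hbern
  have hBθ : (0:ℝ) < B ^ θ := rpow_pos_of_pos hBpos θ
  have h2 : A ^ θ ≤ (1 + θ * ((A - B) / B)) * B ^ θ := (div_le_iff₀ hBθ).mp hbern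
  have h3 : (1 + θ * ((A - B) / B)) * B ^ θ = B ^ θ + θ * (B ^ θ / B) * (A - B) := by
    field_simp
  have h4 : B ^ θ / B = B ^ (θ - 1) := by
    rw [Real.rpow_sub hBpos, Real.rpow_one]
  rw [h3, h4] at h2
  linarith

private lemma rpow_diff_le_big_aux {θ A B : ℝ} (hθ : 1 ≤ θ)
    (hB : 1 ≤ B) (hBA : B ≤ A) :
    A ^ θ - B ^ θ ≤ θ * A ^ (θ - 1) * (A - B) := by
  have hApos : (0:ℝ) < A := by linarith
  have hBpos : (0:ℝ) < B := by linarith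
  have hs : -1 ≤ (B - A) / A := by
    rw [le_div_iff₀ hApos]; linarith
  have hbern := one_add_mul_self_le_rpow_one_add hs hθ
  have he : 1 + (B - A) / A = B / A := by field_simp; ring
  rw [he, div_rpow hBpos.le hApos.le] at hbern
  have hAθ : (0:ℝ) < A ^ θ := rpow_pos_of_pos hApos θ
  have h2 : (1 + θ * ((B - A) / A)) * A ^ θ ≤ B ^ θ := (le_div_iff₀ hAθ).mp hbern
  have h3 : (1 + θ * ((B - A) / A)) * A ^ θ = A ^ θ + θ * (A ^ θ / A) * (B - A) := by
    field_simp
  have h4 : A ^ θ / A = A ^ (θ - 1) := by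
    rw [Real.rpow_sub hApos, Real.rpow_one]
  rw [h3, h4] at h2
  linarith

set_option maxHeartbeats 1000000 in
private lemma scalar_core {q : ℝ} (hq : -(1/2 : ℝ) < q) {a b : ℝ} (hb : 0 ≤ b) (hba : b ≤ a) :
    (2:ℝ) ^ (-|q|) / 2 * (1+a+b) ^ q * (a+b) ≤ (1+a) ^ q * a + (1+b) ^ q * b ∧
    (1+a) ^ q * a + (1+b) ^ q * b ≤ ((2:ℝ) ^ (1+|q|) + 2*|q| + 2) * (1+a+b) ^ q * (a+b) ∧
    (2:ℝ) ^ (-|q|) / 2 * (1+a+b) ^ q * (a-b) ≤ (1+a) ^ q * a - (1+b) ^ q * b ∧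
    (1+a) ^ q * a - (1+b) ^ q * b ≤ ((2:ℝ) ^ (1+|q|) + 2*|q| + 2) * (1+a+b) ^ q * (a-b) := by
  have ha : 0 ≤ a := hb.trans hba
  have hApos : (0:ℝ) < 1 + a := by linarith
  have hBpos : (0:ℝ) < 1 + b := by linarith
  have hspos : (0:ℝ) < 1 + a + b := by linarith
  have hBA : 1 + b ≤ 1 + a := by linarith
  have hAs : 1 + a ≤ 1 + a + b := by linarith
  have hs2A : 1 + a + b ≤ 2 * (1 + a) := by linarith
  have hu : (0:ℝ) < (1+a) ^ q := rpow_pos_of_pos hApos q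
  have hv : (0:ℝ) < (1+b) ^ q := rpow_pos_of_pos hBpos q
  have ht : (0:ℝ) < (1+a+b) ^ q := rpow_pos_of_pos hspos q
  have hKpos : (0:ℝ) < (2:ℝ) ^ |q| := rpow_pos_of_pos (by norm_num) _
  have hK1 : (1:ℝ) ≤ (2:ℝ) ^ |q| := by
    calc (1:ℝ) = (2:ℝ) ^ (0:ℝ) := (rpow_zero 2).symm
    _ ≤ (2:ℝ) ^ |q| := rpow_le_rpow_of_exponent_le one_le_two (abs_nonneg q)
  have hKinv : (2:ℝ) ^ (-|q|) = ((2:ℝ) ^ |q|)⁻¹ := rpow_neg (by norm_num) _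
  have hK2 : (2:ℝ) ^ (1+|q|) = 2 * (2:ℝ) ^ |q| := by
    rw [rpow_add (by norm_num : (0:ℝ) < 2), rpow_one]
  -- comparison between s^q and A^q
  have fact1 : (1+a+b) ^ q ≤ (2:ℝ) ^ |q| * (1+a) ^ q := by
    rcases le_or_gt 0 q with h0 | h0
    · calc (1+a+b) ^ q ≤ (2 * (1+a)) ^ q := rpow_le_rpow hspos.le hs2A h0
      _ = (2:ℝ) ^ q * (1+a) ^ q := mul_rpow (by norm_num) hApos.le
      _ ≤ (2:ℝ) ^ |q| * (1+a) ^ q := by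
          have h5 : (2:ℝ) ^ q ≤ (2:ℝ) ^ |q| :=
            rpow_le_rpow_of_exponent_le one_le_two (le_abs_self q)
          exact mul_le_mul_of_nonneg_right h5 hu.le
    · have h1 : (1+a+b) ^ q ≤ (1+a) ^ q := rpow_le_rpow_of_nonpos hApos hAs h0.le
      calc (1+a+b) ^ q ≤ (1+a) ^ q := h1
      _ = 1 * (1+a) ^ q := (one_mul _).symm
      _ ≤ (2:ℝ) ^ |q| * (1+a) ^ q := mul_le_mul_of_nonneg_right hK1 hu.le
  have fact2 : (1+a) ^ q ≤ (2:ℝ) ^ |q| * (1+a+b) ^ q := by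
    rcases le_or_gt 0 q with h0 | h0
    · have h1 : (1+a) ^ q ≤ (1+a+b) ^ q := rpow_le_rpow hApos.le hAs h0
      calc (1+a) ^ q ≤ (1+a+b) ^ q := h1
      _ = 1 * (1+a+b) ^ q := (one_mul _).symm
      _ ≤ (2:ℝ) ^ |q| * (1+a+b) ^ q := mul_le_mul_of_nonneg_right hK1 ht.le
    · have h1 : (2 * (1+a)) ^ q ≤ (1+a+b) ^ q := rpow_le_rpow_of_nonpos hspos hs2A h0.le
      rw [mul_rpow (by norm_num) hApos.le] at h1
      have h2 : (2:ℝ) ^ q = ((2:ℝ) ^ |q|)⁻¹ := by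
        rw [abs_of_neg h0] at hKinv ⊢
        rw [← hKinv, neg_neg]
      rw [h2] at h1
      calc (1+a) ^ q = (2:ℝ) ^ |q| * (((2:ℝ) ^ |q|)⁻¹ * (1+a) ^ q) := by
            field_simp
      _ ≤ (2:ℝ) ^ |q| * (1+a+b) ^ q := mul_le_mul_of_nonneg_left h1 hKpos.le
  -- monotonicity of t ↦ (1+t)^q * t
  have gmono : (1+b) ^ q * b ≤ (1+a) ^ q * a := by
    have h1 : b / (1+b) ≤ a / (1+a) := by
      rw [div_le_div_iff₀ hBpos hApos]; nlinarith
    have h2 : (1+b) ^ (1+q) ≤ (1+a) ^ (1+q) := rpow_le_rpow hBpos.le hBA (by linarith)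
    have e1 : (1+a) ^ q * a = a / (1+a) * (1+a) ^ (1+q) := by
      rw [rpow_one_add' hApos.le (by intro h; linarith [hq] : (1:ℝ) + q ≠ 0)]
      field_simp
    have e2 : (1+b) ^ q * b = b / (1+b) * (1+b) ^ (1+q) := by
      rw [rpow_one_add' hBpos.le (by intro h; linarith [hq] : (1:ℝ) + q ≠ 0)]
      field_simp
    rw [e1, e2]
    apply mul_le_mul h1 h2 (by positivity) (by positivity)
  refine ⟨?_, ?_, ?_, ?_⟩
  · -- sum, lower
    have h1 : (2:ℝ) ^ (-|q|) * (1+a+b) ^ q ≤ (1+a) ^ q := by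
      rw [hKinv, inv_mul_le_iff₀ hKpos]; exact fact1
    linarith [mul_le_mul_of_nonneg_right h1 (by linarith : (0:ℝ) ≤ a + b),
      mul_le_mul_of_nonneg_left (by linarith : a + b ≤ 2 * a) hu.le,
      mul_nonneg hv.le hb,
      mul_nonneg (mul_nonneg (rpow_nonneg (by norm_num : (0:ℝ) ≤ 2) (-|q|)) ht.le)
        (by linarith : (0:ℝ) ≤ a + b)]
  · -- sum, upper
    have h1 : (1+a) ^ q * a ≤ (2:ℝ) ^ |q| * (1+a+b) ^ q * a :=
      mul_le_mul_of_nonneg_right fact2 ha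
    have h2 : (2:ℝ) ^ |q| * (1+a+b) ^ q * a ≤ (2:ℝ) ^ |q| * (1+a+b) ^ q * (a+b) :=
      mul_le_mul_of_nonneg_left (by linarith) (by positivity)
    have h3 : (0:ℝ) ≤ (1+a+b) ^ q * (a+b) := by positivity
    rw [hK2]
    linarith [h1, h2, gmono, mul_nonneg (abs_nonneg q) h3]
  · -- difference, lower
    rcases le_or_gt 0 q with h0 | h0
    · have h1 : (1+b) ^ q ≤ (1+a) ^ q := rpow_le_rpow hBpos.le hBA h0
      have h2 : (2:ℝ) ^ (-|q|) * (1+a+b) ^ q ≤ (1+a) ^ q := by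
        rw [hKinv, inv_mul_le_iff₀ hKpos]; exact fact1
      linarith [mul_le_mul_of_nonneg_right h2 (by linarith : (0:ℝ) ≤ a - b),
        mul_le_mul_of_nonneg_right h1 hb,
        mul_nonneg (mul_nonneg (rpow_nonneg (by norm_num : (0:ℝ) ≤ 2) (-|q|)) ht.le)
          (by linarith : (0:ℝ) ≤ a - b)]
    · -- q < 0
      have eA : (1+a) ^ q * a = (1+a) ^ (1+q) - (1+a) ^ q := by
        rw [rpow_one_add' hApos.le (by intro h; linarith [hq] : (1:ℝ) + q ≠ 0)]; ring
      have eB : (1+b) ^ q * b = (1+b) ^ (1+q) - (1+b) ^ q := by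
        rw [rpow_one_add' hBpos.le (by intro h; linarith [hq] : (1:ℝ) + q ≠ 0)]; ring
      have hd1 := rpow_diff_ge_aux (by linarith : (0:ℝ) < 1 + q) (by linarith : (1:ℝ) + q ≤ 1)
        (by linarith : (1:ℝ) ≤ 1 + b) hBA
      rw [show (1:ℝ) + q - 1 = q by ring] at hd1
      have hd2 : (1+a) ^ q ≤ (1+b) ^ q := rpow_le_rpow_of_nonpos hBpos hBA h0.le
      have hAq : (1+a+b) ^ q ≤ (1+a) ^ q := rpow_le_rpow_of_nonpos hApos hAs h0.le
      have hKle : (2:ℝ) ^ (-|q|) ≤ 1 := by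
        rw [hKinv]; exact inv_le_one_of_one_le₀ hK1
      have hstep : (1+a+b) ^ q * (a-b) ≤ (1+a) ^ q * (a-b) :=
        mul_le_mul_of_nonneg_right hAq (by linarith)
      have htab : (0:ℝ) ≤ (1+a+b) ^ q * (a-b) := mul_nonneg ht.le (by linarith)
      rw [eA, eB]
      linarith [hd1, hd2,
        mul_le_mul_of_nonneg_left hstep (by linarith : (0:ℝ) ≤ 1 + q),
        mul_nonneg (by linarith : (0:ℝ) ≤ 1/2 + q) htab,
        mul_le_mul_of_nonneg_right hKle htab]
  · -- difference, upper
    rcases le_or_gt 0 q with h0 | h0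
    · have habs : |q| = q := abs_of_nonneg h0
      have t1 : (1+a) ^ q ≤ (1+a+b) ^ q := rpow_le_rpow hApos.le hAs h0
      have t1' : (1+a) ^ q * (a-b) ≤ (1+a+b) ^ q * (a-b) :=
        mul_le_mul_of_nonneg_right t1 (by linarith)
      have t2 : ((1+a) ^ q - (1+b) ^ q) * b ≤ q * (1+a+b) ^ q * (a-b) := by
        rcases le_or_gt q 1 with hq1 | hq1
        · have hd := rpow_diff_le_small_aux h0 hq1 (by linarith : (1:ℝ) ≤ 1 + b) hBA
          have hBB : (1+b) ^ (q-1) * (1+b) = (1+b) ^ q := by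
            rw [← Real.rpow_add_one (ne_of_gt hBpos)]; ring_nf
          have hBs : (1+b) ^ q ≤ (1+a+b) ^ q := rpow_le_rpow hBpos.le (by linarith) h0
          rw [show (1:ℝ)+a-(1+b) = a - b by ring] at hd
          have hd' : ((1+a) ^ q - (1+b) ^ q) * b ≤ q * (1+b) ^ (q-1) * (a-b) * b :=
            mul_le_mul_of_nonneg_right hd hb
          have hpos : (0:ℝ) < (1+b) ^ (q-1) := rpow_pos_of_pos hBpos _
          have hcnn : (0:ℝ) ≤ q * (1+b) ^ (q-1) * (a-b) :=
            mul_nonneg (mul_nonneg h0 hpos.le) (by linarith)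
          have P2 : q * (1+b) ^ (q-1) * (a-b) * b ≤ q * (1+b) ^ (q-1) * (a-b) * (1+b) :=
            mul_le_mul_of_nonneg_left (by linarith) hcnn
          have P3 : q * (1+b) ^ (q-1) * (a-b) * (1+b) = q * ((1+b) ^ q) * (a-b) := by
            rw [← hBB]; ring
          have P4 : (1+b) ^ q * (q * (a-b)) ≤ (1+a+b) ^ q * (q * (a-b)) :=
            mul_le_mul_of_nonneg_right hBs (mul_nonneg h0 (by linarith))
          linarith [hd', P2, P4, P3.le, P3.ge]
        · have hd := rpow_diff_le_big_aux hq1.le (by linarith : (1:ℝ) ≤ 1 + b) hBA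
          have hAA : (1+a) ^ (q-1) * (1+a) = (1+a) ^ q := by
            rw [← Real.rpow_add_one (ne_of_gt hApos)]; ring_nf
          have hAs2 : (1+a) ^ q ≤ (1+a+b) ^ q := rpow_le_rpow hApos.le hAs h0
          rw [show (1:ℝ)+a-(1+b) = a - b by ring] at hd
          have hd' : ((1+a) ^ q - (1+b) ^ q) * b ≤ q * (1+a) ^ (q-1) * (a-b) * b :=
            mul_le_mul_of_nonneg_right hd hb
          have hpos : (0:ℝ) < (1+a) ^ (q-1) := rpow_pos_of_pos hApos _
          have hcnn : (0:ℝ) ≤ q * (1+a) ^ (q-1) * (a-b) :=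
            mul_nonneg (mul_nonneg h0 hpos.le) (by linarith)
          have P2 : q * (1+a) ^ (q-1) * (a-b) * b ≤ q * (1+a) ^ (q-1) * (a-b) * (1+a) :=
            mul_le_mul_of_nonneg_left (by linarith) hcnn
          have P3 : q * (1+a) ^ (q-1) * (a-b) * (1+a) = q * ((1+a) ^ q) * (a-b) := by
            rw [← hAA]; ring
          have P4 : (1+a) ^ q * (q * (a-b)) ≤ (1+a+b) ^ q * (q * (a-b)) :=
            mul_le_mul_of_nonneg_right hAs2 (mul_nonneg h0 (by linarith))
          linarith [hd', P2, P4, P3.le, P3.ge]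
      have hC : 1 + q ≤ (2:ℝ) ^ (1+|q|) + 2*|q| + 2 := by
        have h9 : (0:ℝ) < (2:ℝ) ^ (1+|q|) := rpow_pos_of_pos (by norm_num) _
        rw [habs] at h9 ⊢; linarith
      have hts : (0:ℝ) ≤ (1+a+b) ^ q * (a-b) := mul_nonneg ht.le (by linarith)
      linarith [t1', t2, mul_le_mul_of_nonneg_right hC hts]
    · -- q < 0
      have habs : |q| = -q := abs_of_neg h0
      have eA : (1+a) ^ q * a = (1+a) ^ (1+q) - (1+a) ^ q := by
        rw [rpow_one_add' hApos.le (by intro h; linarith [hq] : (1:ℝ) + q ≠ 0)]; ring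
      have eB : (1+b) ^ q * b = (1+b) ^ (1+q) - (1+b) ^ q := by
        rw [rpow_one_add' hBpos.le (by intro h; linarith [hq] : (1:ℝ) + q ≠ 0)]; ring
      -- T1 : A^{1+q} - B^{1+q} ≤ A^q (a-b) ≤ K s^q (a-b)
      have hT1 := rpow_diff_le_one_aux (by linarith : (1:ℝ) + q ≤ 1)
        (by linarith : (1:ℝ) ≤ 1 + b) hBA
      rw [show (1:ℝ) + q - 1 = q by ring] at hT1
      have hT1' : (1+a) ^ (1+q) - (1+b) ^ (1+q) ≤ (2:ℝ) ^ |q| * (1+a+b) ^ q * (a-b) := by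
        have h7 := mul_le_mul_of_nonneg_right fact2 (by linarith : (0:ℝ) ≤ a - b)
        have h8 := mul_le_mul_of_nonneg_right hT1 (le_refl (0:ℝ))
        rw [show (1:ℝ)+a-(1+b) = a - b by ring] at hT1
        linarith [hT1, h7]
      -- T2 : B^q - A^q ≤ 2 s^q (a-b)
      have hApq : (0:ℝ) < (1+a) ^ |q| := rpow_pos_of_pos hApos _
      have hBpq : (0:ℝ) < (1+b) ^ |q| := rpow_pos_of_pos hBpos _
      have hspq : (0:ℝ) < (1+a+b) ^ |q| := rpow_pos_of_pos hspos _
      have hAq : (1+a) ^ q = ((1+a) ^ |q|)⁻¹ := by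
        rw [habs, rpow_neg hApos.le, inv_inv]
      have hBq : (1+b) ^ q = ((1+b) ^ |q|)⁻¹ := by
        rw [habs, rpow_neg hBpos.le, inv_inv]
      have hsq : (1+a+b) ^ q = ((1+a+b) ^ |q|)⁻¹ := by
        rw [habs, rpow_neg hspos.le, inv_inv]
      have hinvA : ((1:ℝ)+a)⁻¹ ≤ 2 * (1+a+b) ^ q := by
        have hs1 : (1+a+b) ^ |q| ≤ 2 * (1+a) := by
          calc (1+a+b) ^ |q| ≤ (1+a+b) ^ (1:ℝ) :=
                rpow_le_rpow_of_exponent_le (by linarith) (by linarith)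
          _ = 1+a+b := rpow_one _
          _ ≤ 2 * (1+a) := hs2A
        have h5 : (2 * (1+a))⁻¹ ≤ ((1+a+b) ^ |q|)⁻¹ := inv_anti₀ hspq hs1
        have h6 : ((1:ℝ)+a)⁻¹ = 2 * (2 * (1+a))⁻¹ := by
          field_simp
        rw [hsq, h6]
        linarith
      have hT2 : (1+b) ^ q - (1+a) ^ q ≤ 2 * (1+a+b) ^ q * (a-b) := by
        have hd := rpow_diff_le_one_aux (by linarith : |q| ≤ 1)
          (by linarith : (1:ℝ) ≤ 1 + b) hBA
        rw [show (1:ℝ)+a-(1+b) = a - b by ring] at hd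
        have hBq1 : (1:ℝ) ≤ (1+b) ^ |q| := one_le_rpow (by linarith) (abs_nonneg q)
        have e3 : (1+b) ^ q - (1+a) ^ q
            = ((1+a) ^ |q| - (1+b) ^ |q|) * (((1+a) ^ |q|)⁻¹ * ((1+b) ^ |q|)⁻¹) := by
          rw [hAq, hBq]
          field_simp
        have e4 : (1+a) ^ (|q|-1) = (1+a) ^ |q| * ((1:ℝ)+a)⁻¹ := by
          rw [Real.rpow_sub hApos, rpow_one, div_eq_mul_inv]
        have hnum0 : (0:ℝ) ≤ (1+a) ^ (|q|-1) * (a-b) := by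
          have : (0:ℝ) < (1+a) ^ (|q|-1) := rpow_pos_of_pos hApos _
          nlinarith
        calc (1+b) ^ q - (1+a) ^ q
            = ((1+a) ^ |q| - (1+b) ^ |q|) * (((1+a) ^ |q|)⁻¹ * ((1+b) ^ |q|)⁻¹) := e3
          _ ≤ ((1+a) ^ (|q|-1) * (a-b)) * (((1+a) ^ |q|)⁻¹ * ((1+b) ^ |q|)⁻¹) :=
              mul_le_mul_of_nonneg_right hd (by positivity)
          _ ≤ ((1+a) ^ (|q|-1) * (a-b)) * (((1+a) ^ |q|)⁻¹ * 1) := by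
              apply mul_le_mul_of_nonneg_left _ hnum0
              exact mul_le_mul_of_nonneg_left (inv_le_one_of_one_le₀ hBq1) (by positivity)
          _ = (a-b) * (((1:ℝ)+a)⁻¹ * ((1+a) ^ |q| * ((1+a) ^ |q|)⁻¹)) := by
              rw [e4]; ring
          _ = (a-b) * ((1:ℝ)+a)⁻¹ := by
              rw [mul_inv_cancel₀ (ne_of_gt hApq), mul_one]
          _ ≤ (a-b) * (2 * (1+a+b) ^ q) :=
              mul_le_mul_of_nonneg_left hinvA (by linarith)
          _ = 2 * (1+a+b) ^ q * (a-b) := by ring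
      have hts : (0:ℝ) ≤ (1+a+b) ^ q * (a-b) := mul_nonneg ht.le (by linarith)
      have hC : (2:ℝ) ^ |q| + 2 ≤ (2:ℝ) ^ (1+|q|) + 2*|q| + 2 := by
        rw [hK2]; have := abs_nonneg q; linarith
      rw [eA, eB]
      linarith [hT1', hT2, mul_le_mul_of_nonneg_right hC hts]

private lemma quad_bounds {c1 C1 t u v a b w : ℝ} (ht : 0 ≤ t) (hc1 : 0 ≤ c1)
    (hu : 0 ≤ u) (hv : 0 ≤ v) (hb : 0 ≤ b) (hba : b ≤ a)
    (hw1 : w ≤ a * b) (hw2 : -(a * b) ≤ w)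
    (e1 : c1 * t * (a+b) ≤ u*a + v*b) (e2 : u*a + v*b ≤ C1 * t * (a+b))
    (e3 : c1 * t * (a-b) ≤ u*a - v*b) (e4 : u*a - v*b ≤ C1 * t * (a-b)) :
    c1^2 * t^2 * (a^2 + b^2 - 2*w) ≤ u^2*a^2 + v^2*b^2 - 2*(u*v)*w ∧
    u^2*a^2 + v^2*b^2 - 2*(u*v)*w ≤ C1^2 * t^2 * (a^2 + b^2 - 2*w) := by
  have hab : 0 ≤ a - b := by linarith
  constructor
  · rcases le_or_gt (c1^2 * t^2) (u*v) with hk | hk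
    · have end2 : (c1*t*(a-b))^2 ≤ (u*a - v*b)^2 :=
        pow_le_pow_left₀ (mul_nonneg (mul_nonneg hc1 ht) hab) e3 2
      have h1 : c1^2*t^2*(a*b - w) ≤ u*v*(a*b - w) :=
        mul_le_mul_of_nonneg_right hk (by linarith)
      nlinarith [end2, h1]
    · have end1 : (c1*t*(a+b))^2 ≤ (u*a + v*b)^2 :=
        pow_le_pow_left₀ (mul_nonneg (mul_nonneg hc1 ht) (by linarith)) e1 2
      have h1 : u*v*(a*b + w) ≤ c1^2*t^2*(a*b + w) :=
        mul_le_mul_of_nonneg_right hk.le (by linarith)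
      nlinarith [end1, h1]
  · have huv : 0 ≤ u*a - v*b :=
      le_trans (mul_nonneg (mul_nonneg hc1 ht) hab) e3
    have huv2 : 0 ≤ u*a + v*b :=
      add_nonneg (mul_nonneg hu (hb.trans hba)) (mul_nonneg hv hb)
    rcases le_or_gt (u*v) (C1^2 * t^2) with hk | hk
    · have end2 : (u*a - v*b)^2 ≤ (C1*t*(a-b))^2 := pow_le_pow_left₀ huv e4 2
      have h1 : u*v*(a*b - w) ≤ C1^2*t^2*(a*b - w) :=
        mul_le_mul_of_nonneg_right hk (by linarith)
      nlinarith [end2, h1]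
    · have end1 : (u*a + v*b)^2 ≤ (C1*t*(a+b))^2 := pow_le_pow_left₀ huv2 e2 2
      have h1 : C1^2*t^2*(a*b + w) ≤ u*v*(a*b + w) :=
        mul_le_mul_of_nonneg_right hk.le (by linarith)
      nlinarith [end1, h1]


/-- two-sided bound for the natural quantity `F(ξ) = (1+|ξ|)^((p-2)/2) ξ`. -/
theorem F_two_sided_bound (d D : ℕ) (p : ℝ) (hp : 1 < p)
    (F : EuclideanSpace ℝ (Fin d × Fin D) → EuclideanSpace ℝ (Fin d × Fin D))
    (hF : ∀ ξ, F ξ = ((1 + ‖ξ‖) ^ ((p - 2) / 2) : ℝ) • ξ) :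
    ∃ c C : ℝ, 0 < c ∧ 0 < C ∧ ∀ ξ η : EuclideanSpace ℝ (Fin d × Fin D),
      c * (1 + ‖ξ‖ + ‖η‖) ^ (p - 2) * ‖ξ - η‖ ^ 2 ≤ ‖F ξ - F η‖ ^ 2 ∧
      ‖F ξ - F η‖ ^ 2 ≤ C * (1 + ‖ξ‖ + ‖η‖) ^ (p - 2) * ‖ξ - η‖ ^ 2 := by
  have hq : -(1/2 : ℝ) < (p - 2) / 2 := by linarith
  set q : ℝ := (p - 2) / 2 with hqdef
  refine ⟨((2:ℝ) ^ (-|q|) / 2)^2, ((2:ℝ) ^ (1+|q|) + 2*|q| + 2)^2,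
    by positivity, by positivity, ?_⟩
  have key : ∀ ξ η : EuclideanSpace ℝ (Fin d × Fin D), ‖η‖ ≤ ‖ξ‖ →
      ((2:ℝ) ^ (-|q|) / 2)^2 * (1 + ‖ξ‖ + ‖η‖) ^ (p - 2) * ‖ξ - η‖ ^ 2 ≤ ‖F ξ - F η‖ ^ 2 ∧
      ‖F ξ - F η‖ ^ 2 ≤ ((2:ℝ) ^ (1+|q|) + 2*|q| + 2)^2 * (1 + ‖ξ‖ + ‖η‖) ^ (p - 2) * ‖ξ - η‖ ^ 2 := by
    intro ξ η hba
    obtain ⟨e1, e2, e3, e4⟩ := scalar_core hq (norm_nonneg η) hba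
    have hApos : (0:ℝ) < 1 + ‖ξ‖ := by positivity
    have hBpos : (0:ℝ) < 1 + ‖η‖ := by positivity
    have hspos : (0:ℝ) < 1 + ‖ξ‖ + ‖η‖ := by positivity
    have hu : (0:ℝ) < (1 + ‖ξ‖) ^ q := rpow_pos_of_pos hApos q
    have hv : (0:ℝ) < (1 + ‖η‖) ^ q := rpow_pos_of_pos hBpos q
    have ht : (0:ℝ) < (1 + ‖ξ‖ + ‖η‖) ^ q := rpow_pos_of_pos hspos q
    have hw1 : (inner ℝ ξ η : ℝ) ≤ ‖ξ‖ * ‖η‖ := real_inner_le_norm ξ η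
    have hw2 : -(‖ξ‖ * ‖η‖) ≤ (inner ℝ ξ η : ℝ) :=
      (abs_le.mp (abs_real_inner_le_norm ξ η)).1
    have hFn : ‖F ξ - F η‖ ^ 2
        = ((1+‖ξ‖) ^ q)^2 * ‖ξ‖^2 + ((1+‖η‖) ^ q)^2 * ‖η‖^2
          - 2 * ((1+‖ξ‖) ^ q * (1+‖η‖) ^ q) * (inner ℝ ξ η : ℝ) := by
      rw [hF ξ, hF η, norm_sub_sq_real, norm_smul, norm_smul,
        real_inner_smul_left, real_inner_smul_right,
        Real.norm_eq_abs, Real.norm_eq_abs, abs_of_pos hu, abs_of_pos hv]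
      ring
    have hxy : ‖ξ - η‖ ^ 2 = ‖ξ‖^2 + ‖η‖^2 - 2 * (inner ℝ ξ η : ℝ) := by
      rw [norm_sub_sq_real]; ring
    have hpow : (1 + ‖ξ‖ + ‖η‖) ^ (p - 2) = ((1 + ‖ξ‖ + ‖η‖) ^ q)^2 := by
      rw [show p - 2 = q * 2 by rw [hqdef]; ring, Real.rpow_mul hspos.le,
        show (2:ℝ) = ((2:ℕ):ℝ) by norm_num, Real.rpow_natCast]
    obtain ⟨L, U⟩ := quad_bounds ht.le (by positivity) hu.le hv.le
      (norm_nonneg η) hba hw1 hw2 e1 e2 e3 e4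
    rw [hFn, hxy, hpow]
    constructor
    · linarith [L]
    · linarith [U]
  intro ξ η
  rcases le_total ‖η‖ ‖ξ‖ with h | h
  · exact key ξ η h
  · obtain ⟨h1, h2⟩ := key η ξ h
    rw [norm_sub_rev η ξ, norm_sub_rev (F η) (F ξ),
      show 1 + ‖η‖ + ‖ξ‖ = 1 + ‖ξ‖ + ‖η‖ from by ring] at h1 h2
    exact ⟨h1, h2⟩
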